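/- Assume p and q are even (hence both ≥ 2). Then the number of tuples (z, b, a, c), where z is a ρ-vector, b_1 ≥ … ≥ b_{q−1} ≥ 0 and a_1 ≥ … ≥ a_{p−1} ≥ 0 are integers, and c is a nonzero integer, satisfying z_i − 2b_i = q − i for all 1 ≤ i ≤ q−1, z_q + 2c = 0, z_{q+j} + 2a_{p−j} = −j for all 1 ≤ j ≤ p−1, and additionally either (c > 0 and a_{p−1} ≥ c) or (c < 0 and b_{q−1} ≥ −c), equals the binomial coefficient C(k, p/2) = C(k, q/2). -/

import Mathlib

/-- A solution for the Dirac cohomology multiplicity count of `X'(p,q;0,0)` for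
`Sp(2n,ℝ)`, `n = 2k−1 = p+q−1`, `p, q ≥ 2`: a ρ-vector `z` (strictly decreasing with
absolute values exactly `{1, …, n}`), weakly decreasing nonnegative integers
`b_1 ≥ … ≥ b_{q−1} ≥ 0`, `a_1 ≥ … ≥ a_{p−1} ≥ 0`, and a nonzero integer `c`, with
`z_i − 2b_i = q − i` for `1 ≤ i ≤ q−1`, `z_q + 2c = 0`, `z_{q+j} + 2a_{p−j} = −j` for
`1 ≤ j ≤ p−1`, and either (`c > 0` and `a_{p−1} ≥ c`) or (`c < 0` and `b_{q−1} ≥ −c`)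
(written here with 0-based indices). -/
structure RhoSol00 (n p q : ℕ) (hp : 2 ≤ p) (hq : 2 ≤ q) (hn : q - 1 + p = n) where
  z : Fin n → ℤ
  b : Fin (q - 1) → ℤ
  a : Fin (p - 1) → ℤ
  c : ℤ
  z_anti : StrictAnti z
  z_abs : Finset.univ.image (fun i => |z i|) = Finset.Icc (1 : ℤ) (n : ℤ)
  b_anti : Antitone b
  a_anti : Antitone a
  b_nonneg : ∀ i, 0 ≤ b i
  a_nonneg : ∀ m, 0 ≤ a m
  c_ne : c ≠ 0
  hzb : ∀ i : Fin (q - 1),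
    z ⟨i.1, by have := i.isLt; omega⟩ - 2 * b i = (q : ℤ) - 1 - i.1
  hzc : z ⟨q - 1, by omega⟩ + 2 * c = 0
  hza : ∀ j : Fin (p - 1),
    z ⟨q + j.1, by have := j.isLt; omega⟩ +
      2 * a ⟨p - 2 - j.1, by have := j.isLt; omega⟩ = -(j.1 : ℤ) - 1
  side : (0 < c ∧ c ≤ a ⟨p - 2, by omega⟩) ∨ (c < 0 ∧ -c ≤ b ⟨q - 2, by omega⟩)

open Finset
set_option maxHeartbeats 2000000

namespace Rho14

/-- number of elements of `W` greater than `x` -/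
def cntGT (W : Finset ℤ) (x : ℤ) : ℕ := (W.filter (fun v => x < v)).card
/-- number of positive elements of `W` that are `≤ m` -/
def Acnt (W : Finset ℤ) (m : ℤ) : ℕ := (W.filter (fun v => 0 < v ∧ v ≤ m)).card
/-- number of negative elements of `W` with absolute value `≤ m` -/
def Bcnt (W : Finset ℤ) (m : ℤ) : ℕ := (W.filter (fun v => -m ≤ v ∧ v < 0)).card

section W

variable {n : ℕ} {W : Finset ℤ} {z : Fin n → ℤ}

theorem L_rank (hz : StrictAnti z) (him : Finset.univ.image z = W) (i : Fin n) :
    cntGT W (z i) = i := by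
  subst him
  unfold cntGT
  rw [Finset.filter_image, Finset.card_image_of_injective _ hz.injective]
  have : (univ.filter (fun j => z i < z j)) = Finset.Iio i := by
    ext j; simp [hz.lt_iff_gt]
  rw [this, Fin.card_Iio]

theorem L_card (hz : StrictAnti z) (him : Finset.univ.image z = W) : W.card = n := by
  subst him
  rw [Finset.card_image_of_injective _ hz.injective, card_univ, Fintype.card_fin]

variable (habs : W.image (fun v => |v|) = Finset.Icc (1:ℤ) (n:ℤ))

include habs

theorem L_absmem {v : ℤ} (hv : v ∈ W) : 1 ≤ |v| ∧ |v| ≤ n := by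
  have : |v| ∈ W.image (fun v => |v|) := Finset.mem_image_of_mem _ hv
  rw [habs, Finset.mem_Icc] at this
  exact this

theorem L_injabs (hc : W.card = n) {v w : ℤ} (hv : v ∈ W) (hw : w ∈ W)
    (h : |v| = |w|) : v = w := by
  have hinj : Set.InjOn (fun v : ℤ => |v|) W := by
    rw [← Finset.card_image_iff, habs, Int.card_Icc, hc]
    omega
  exact hinj hv hw h

theorem L_notboth (hc : W.card = n) {m : ℤ} (hm : 1 ≤ m) (h1 : m ∈ W) (h2 : -m ∈ W) :
    False := by
  have := L_injabs habs hc h1 h2 (by rw [abs_neg])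
  omega

theorem L_one (hc : W.card = n) {m : ℤ} (hm1 : 1 ≤ m) (hm2 : m ≤ n) :
    m ∈ W ∨ -m ∈ W := by
  have : m ∈ W.image (fun v => |v|) := by rw [habs, Finset.mem_Icc]; exact ⟨hm1, hm2⟩
  obtain ⟨v, hv, hvm⟩ := Finset.mem_image.1 this
  rcases abs_cases v with ⟨h, _⟩ | ⟨h, _⟩
  · left; rw [← hvm, h]; exact hv
  · right; rw [← hvm, h]; simpa using hv

theorem L_AB (hc : W.card = n) {m : ℤ} (hm0 : 0 ≤ m) (hmn : m ≤ n) :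
    (Acnt W m : ℤ) + (Bcnt W m : ℤ) = m := by
  classical
  have hsplit : W.filter (fun v => |v| ≤ m)
      = W.filter (fun v => (0 < v ∧ v ≤ m) ∨ (-m ≤ v ∧ v < 0)) := by
    apply Finset.filter_congr
    intro v hv
    have h1 := (L_absmem habs hv).1
    rcases abs_cases v with ⟨h, h'⟩ | ⟨h, h'⟩ <;>
      (constructor <;> intro hh <;> omega)
  have hdisj : Disjoint (W.filter (fun v => 0 < v ∧ v ≤ m))
      (W.filter (fun v => -m ≤ v ∧ v < 0)) := by
    rw [Finset.disjoint_filter]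
    intro v _ h1 h2
    omega
  have hcard2 : (W.filter (fun v => |v| ≤ m)).card = Acnt W m + Bcnt W m := by
    rw [hsplit, Finset.filter_or, Finset.card_union_of_disjoint hdisj]; rfl
  have himg : (W.filter (fun v => |v| ≤ m)).image (fun v => |v|)
      = (Finset.Icc (1:ℤ) (n:ℤ)).filter (fun x => x ≤ m) := by
    rw [← habs, Finset.filter_image]
  have hinj : Set.InjOn (fun v : ℤ => |v|) (W.filter (fun v => |v| ≤ m)) := by
    intro v hv w hw h
    exact L_injabs habs hc (Finset.mem_of_mem_filter _ hv) (Finset.mem_of_mem_filter _ hw) h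
  have hicc : (Finset.Icc (1:ℤ) (n:ℤ)).filter (fun x => x ≤ m) = Finset.Icc 1 m := by
    ext x; simp only [Finset.mem_filter, Finset.mem_Icc]; omega
  have := Finset.card_image_of_injOn hinj
  rw [himg, hicc, Int.card_Icc] at this
  omega

omit habs in
theorem L_A_le {m : ℤ} (hm0 : 0 ≤ m) : (Acnt W m : ℤ) ≤ m := by
  have : W.filter (fun v => 0 < v ∧ v ≤ m) ⊆ Finset.Icc 1 m := by
    intro v hv
    rw [Finset.mem_filter] at hv
    rw [Finset.mem_Icc]
    omega
  have := Finset.card_le_card this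
  rw [Int.card_Icc] at this
  unfold Acnt
  omega

omit habs in
theorem L_B_le {m : ℤ} (hm0 : 0 ≤ m) : (Bcnt W m : ℤ) ≤ m := by
  have hs : W.filter (fun v => -m ≤ v ∧ v < 0) ⊆ Finset.Icc (-m) (-1) := by
    intro v hv
    rw [Finset.mem_filter] at hv
    rw [Finset.mem_Icc]
    omega
  have := Finset.card_le_card hs
  rw [Int.card_Icc] at this
  unfold Bcnt
  omega

theorem L_zero_notmem (h0 : (0:ℤ) ∈ W) : False := by
  have := (L_absmem habs h0).1
  simp at this

/-- positivity in terms of rank -/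
theorem L_pos_iff (hz : StrictAnti z) (him : Finset.univ.image z = W) (i : Fin n) :
    0 < z i ↔ (i : ℕ) < Acnt W n := by
  have hzi : z i ∈ W := by rw [← him]; exact Finset.mem_image_of_mem _ (Finset.mem_univ i)
  have hrank := L_rank hz him i
  have hzne : z i ≠ 0 := by
    intro h; exact L_zero_notmem habs (h ▸ hzi)
  constructor
  · intro hpos
    have hsub : W.filter (fun v => z i < v) ⊂ W.filter (fun v => 0 < v ∧ v ≤ (n:ℤ)) := by
      constructor
      · intro v hv
        rw [Finset.mem_filter] at hv ⊢
        have := (L_absmem habs hv.1).2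
        rcases abs_cases v with ⟨h, _⟩ | ⟨h, _⟩ <;> exact ⟨hv.1, by omega⟩
      · intro hsub'
        have : z i ∈ W.filter (fun v => z i < v) := by
          apply hsub'
          rw [Finset.mem_filter]
          have := (L_absmem habs hzi).2
          rcases abs_cases (z i) with ⟨h, _⟩ | ⟨h, _⟩ <;> exact ⟨hzi, by omega⟩
        rw [Finset.mem_filter] at this
        omega
    have := Finset.card_lt_card hsub
    unfold cntGT at hrank
    unfold Acnt
    omega
  · intro hlt
    by_contra hle
    push_neg at hle
    have hneg : z i < 0 := lt_of_le_of_ne hle hzne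
    have hsub : W.filter (fun v => 0 < v ∧ v ≤ (n:ℤ)) ⊆ W.filter (fun v => z i < v) := by
      intro v hv
      rw [Finset.mem_filter] at hv ⊢
      exact ⟨hv.1, by omega⟩
    have := Finset.card_le_card hsub
    unfold cntGT at hrank
    unfold Acnt at hlt
    omega

theorem L_rank_pos (hz : StrictAnti z) (him : Finset.univ.image z = W) {i : Fin n}
    {m : ℤ} (hmi : z i = m) (hm : 0 < m) : (i : ℕ) + Acnt W m = Acnt W n := by
  classical
  have hrank := L_rank hz him i
  rw [hmi] at hrank
  have hsplit : W.filter (fun v => 0 < v ∧ v ≤ (n:ℤ))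
      = W.filter (fun v => m < v) ∪ W.filter (fun v => 0 < v ∧ v ≤ m) := by
    rw [← Finset.filter_or]
    apply Finset.filter_congr
    intro v hv
    have := (L_absmem habs hv).2
    rcases abs_cases v with ⟨h, _⟩ | ⟨h, _⟩ <;>
      (constructor <;> intro hh <;> omega)
  have hdisj : Disjoint (W.filter (fun v => m < v)) (W.filter (fun v => 0 < v ∧ v ≤ m)) := by
    rw [Finset.disjoint_filter]
    intro v _ h1 h2
    omega
  have : (W.filter (fun v => 0 < v ∧ v ≤ (n:ℤ))).card
      = (W.filter (fun v => m < v)).card + (W.filter (fun v => 0 < v ∧ v ≤ m)).card := by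
    rw [hsplit, Finset.card_union_of_disjoint hdisj]
  unfold cntGT at hrank
  unfold Acnt
  omega

theorem L_rank_neg (hz : StrictAnti z) (him : Finset.univ.image z = W) {i : Fin n}
    {m : ℤ} (hmi : z i = -m) (hm : 0 < m) : (i : ℕ) + 1 = Acnt W n + Bcnt W m := by
  classical
  have hrank := L_rank hz him i
  rw [hmi] at hrank
  have hzi : (-m) ∈ W := by
    rw [← him, ← hmi]; exact Finset.mem_image_of_mem _ (Finset.mem_univ i)
  have hsplit : W.filter (fun v => -m < v)
      = W.filter (fun v => 0 < v ∧ v ≤ (n:ℤ)) ∪ W.filter (fun v => -m < v ∧ v < 0) := by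
    rw [← Finset.filter_or]
    apply Finset.filter_congr
    intro v hv
    have h1 := (L_absmem habs hv).1
    have h2 := (L_absmem habs hv).2
    rcases abs_cases v with ⟨h, _⟩ | ⟨h, _⟩ <;>
      (constructor <;> intro hh <;> omega)
  have hdisj : Disjoint (W.filter (fun v => 0 < v ∧ v ≤ (n:ℤ)))
      (W.filter (fun v => -m < v ∧ v < 0)) := by
    rw [Finset.disjoint_filter]
    intro v _ h1 h2
    omega
  have hB : W.filter (fun v => -m ≤ v ∧ v < 0)
      = insert (-m) (W.filter (fun v => -m < v ∧ v < 0)) := by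
    ext v
    simp only [Finset.mem_insert, Finset.mem_filter]
    constructor
    · intro ⟨hv, h1, h2⟩
      rcases eq_or_lt_of_le h1 with h | h
      · left; omega
      · right; exact ⟨hv, h, h2⟩
    · rintro (rfl | ⟨hv, h1, h2⟩)
      · exact ⟨hzi, by omega⟩
      · exact ⟨hv, by omega⟩
  have hBcard : Bcnt W m = (W.filter (fun v => -m < v ∧ v < 0)).card + 1 := by
    unfold Bcnt
    rw [hB, Finset.card_insert_of_notMem (by simp)]
  have : (W.filter (fun v => -m < v)).card
      = (W.filter (fun v => 0 < v ∧ v ≤ (n:ℤ))).card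
        + (W.filter (fun v => -m < v ∧ v < 0)).card := by
    rw [hsplit, Finset.card_union_of_disjoint hdisj]
  unfold cntGT at hrank
  unfold Acnt at *
  omega

end W

section W2

variable {n : ℕ} {W : Finset ℤ} {z : Fin n → ℤ}

theorem L_Bstep {m : ℤ} (hm : 1 ≤ m) :
    Bcnt W m = Bcnt W (m-1) + (if -m ∈ W then 1 else 0) := by
  classical
  unfold Bcnt
  by_cases h : -m ∈ W
  · rw [if_pos h]
    have hins : W.filter (fun v => -m ≤ v ∧ v < 0)
        = insert (-m) (W.filter (fun v => -(m-1) ≤ v ∧ v < 0)) := by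
      ext v
      simp only [Finset.mem_insert, Finset.mem_filter]
      constructor
      · intro ⟨hv, h1, h2⟩
        rcases eq_or_lt_of_le h1 with h3 | h3
        · left; omega
        · right; exact ⟨hv, by omega, h2⟩
      · rintro (rfl | ⟨hv, h1, h2⟩)
        · exact ⟨h, by omega⟩
        · exact ⟨hv, by omega⟩
    rw [hins, Finset.card_insert_of_notMem (by simp only [Finset.mem_filter]; omega)]
  · rw [if_neg h]
    have : W.filter (fun v => -m ≤ v ∧ v < 0) = W.filter (fun v => -(m-1) ≤ v ∧ v < 0) := by
      apply Finset.filter_congr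
      intro v hv
      have hvne : v ≠ -m := by rintro rfl; exact h hv
      constructor <;> intro hh <;> omega
    rw [this]
    omega

theorem L_B0 : Bcnt W 0 = 0 := by
  unfold Bcnt
  rw [Finset.filter_false_of_mem (fun x _ => by omega), Finset.card_empty]

theorem L_surj (him : Finset.univ.image z = W) {v : ℤ} (hv : v ∈ W) : ∃ i, z i = v := by
  rw [← him] at hv
  obtain ⟨i, _, hi⟩ := Finset.mem_image.1 hv
  exact ⟨i, hi⟩

theorem L_unique {z' : Fin n → ℤ} (hz : StrictAnti z) (hz' : StrictAnti z')
    (him : Finset.univ.image z = Finset.univ.image z') : z = z' := by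
  have hmono : StrictMono (fun i : Fin n => z i.rev) := by
    intro i j hij
    exact hz (Fin.rev_lt_rev.2 hij)
  have hmono' : StrictMono (fun i : Fin n => z' i.rev) := by
    intro i j hij
    exact hz' (Fin.rev_lt_rev.2 hij)
  have hcard : (Finset.univ.image z').card = n := L_card hz' rfl
  have h1 : (fun i : Fin n => z i.rev) = (Finset.univ.image z').orderEmbOfFin hcard := by
    apply Finset.orderEmbOfFin_unique hcard _ hmono
    intro x
    rw [← him]
    exact Finset.mem_image_of_mem _ (Finset.mem_univ _)
  have h2 : (fun i : Fin n => z' i.rev) = (Finset.univ.image z').orderEmbOfFin hcard := by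
    apply Finset.orderEmbOfFin_unique hcard _ hmono'
    intro x
    exact Finset.mem_image_of_mem _ (Finset.mem_univ _)
  funext i
  have := congrFun (h1.trans h2.symm) i.rev
  simpa using this

theorem L_gap (hz : StrictAnti z) {i j : Fin n} (h : i ≤ j) :
    z j + ((j : ℤ) - (i : ℤ)) ≤ z i := by
  have key : ∀ d : ℕ, ∀ i j : Fin n, (j : ℕ) = (i : ℕ) + d → z j + (d : ℤ) ≤ z i := by
    intro d
    induction d with
    | zero =>
      intro i j hij
      have : i = j := Fin.ext (by omega)
      subst this
      simp
    | succ d ih =>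
      intro i j hij
      have hj' : (i : ℕ) + d < n := by have := j.isLt; omega
      set j' : Fin n := ⟨(i : ℕ) + d, hj'⟩ with hj'def
      have h1 := ih i j' rfl
      have h2 : z j < z j' := hz (by rw [Fin.lt_def]; simp [hj'def]; omega)
      push_cast
      push_cast at h1
      omega
  have := key ((j : ℕ) - (i : ℕ)) i j (by omega)
  push_cast at this
  rw [Fin.le_def] at h
  omega

end W2

section VT

/-- block of values with indices `j`: {1} for j = 0, {2j, 2j+1} for j ≥ 1 -/
def blkSet (j : ℕ) : Finset ℤ := if j = 0 then {1} else {2*(j:ℤ), 2*(j:ℤ)+1}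

/-- negative value set determined by a choice `T` of blocks -/
def NegT {k : ℕ} (T : Finset (Fin k)) : Finset ℤ := T.biUnion (fun j => blkSet j.1)

/-- value set determined by `T` -/
noncomputable def VT (n : ℕ) {k : ℕ} (T : Finset (Fin k)) : Finset ℤ :=
  ((Finset.Icc (1:ℤ) (n:ℤ)) \ NegT T) ∪ (NegT T).image (fun m => -m)

theorem mem_blkSet {j : ℕ} {m : ℤ} :
    m ∈ blkSet j ↔ ((j = 0 ∧ m = 1) ∨ (j ≠ 0 ∧ (m = 2*(j:ℤ) ∨ m = 2*(j:ℤ)+1))) := by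
  unfold blkSet
  split_ifs with h <;> simp [h]

variable {k n : ℕ} {T : Finset (Fin k)}

theorem mem_NegT {m : ℤ} : m ∈ NegT T ↔ ∃ j ∈ T, m ∈ blkSet j.1 := Finset.mem_biUnion

theorem NegT_bounds {m : ℤ} (hm : m ∈ NegT T) (hn : n = 2*k - 1) (hk : 1 ≤ k) :
    1 ≤ m ∧ m ≤ n := by
  obtain ⟨j, _, hj⟩ := mem_NegT.1 hm
  have hjk := j.isLt
  rw [mem_blkSet] at hj
  omega

theorem NegT_subset (hn : n = 2*k - 1) (hk : 1 ≤ k) :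
    NegT T ⊆ Finset.Icc (1:ℤ) (n:ℤ) := by
  intro m hm
  have := NegT_bounds hm hn hk
  rw [Finset.mem_Icc]
  omega

theorem NegT_mem_one {j : Fin k} (hj : (j:ℕ) = 0) : (1:ℤ) ∈ NegT T ↔ j ∈ T := by
  rw [mem_NegT]
  constructor
  · rintro ⟨j', hj', hjm⟩
    rw [mem_blkSet] at hjm
    have : j' = j := Fin.ext (by omega)
    rwa [← this]
  · intro h
    refine ⟨j, h, ?_⟩
    rw [mem_blkSet]
    left
    exact ⟨hj, rfl⟩

theorem NegT_mem_even {j : Fin k} (hj : 1 ≤ (j:ℕ)) :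
    (2*((j:ℕ):ℤ) ∈ NegT T ↔ j ∈ T) ∧ (2*((j:ℕ):ℤ)+1 ∈ NegT T ↔ j ∈ T) := by
  constructor <;>
  · rw [mem_NegT]
    constructor
    · rintro ⟨j', hj', hjm⟩
      rw [mem_blkSet] at hjm
      have : j' = j := Fin.ext (by omega)
      rwa [← this]
    · intro h
      refine ⟨j, h, ?_⟩
      rw [mem_blkSet]
      right
      exact ⟨by omega, by omega⟩

theorem blkSet_disjoint {j j' : ℕ} (h : j ≠ j') : Disjoint (blkSet j) (blkSet j') := by
  rw [Finset.disjoint_left]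
  intro m hm hm'
  rw [mem_blkSet] at hm hm'
  omega

theorem card_NegT {j0 : Fin k} (hj0 : (j0:ℕ) = 0) :
    (NegT T).card + (if j0 ∈ T then 1 else 0) = 2 * T.card := by
  classical
  unfold NegT
  rw [Finset.card_biUnion (fun x _ y _ hxy => blkSet_disjoint (fun h => hxy (Fin.ext h)))]
  have hcard : ∀ j ∈ T, (blkSet j.1).card + (if j = j0 then 1 else 0) = 2 := by
    intro j _
    unfold blkSet
    split_ifs with h1 h2 h2
    · rfl
    · exact absurd (Fin.ext (by omega)) h2
    · exact absurd (by rw [h2]; exact hj0) h1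
    · rw [Finset.card_insert_of_notMem (by simp only [Finset.mem_singleton]; omega),
        Finset.card_singleton]
  have h2 := Finset.sum_congr rfl hcard
  rw [Finset.sum_add_distrib, Finset.sum_ite_eq' T j0 (fun _ => 1),
    Finset.sum_const, smul_eq_mul] at h2
  by_cases hd : j0 ∈ T
  · rw [if_pos hd] at h2 ⊢; omega
  · rw [if_neg hd] at h2 ⊢; omega

theorem mem_VT_pos {m : ℤ} (h1 : 1 ≤ m) (h2 : m ≤ (n:ℤ)) :
    m ∈ VT n T ↔ m ∉ NegT T := by
  unfold VT
  rw [Finset.mem_union, Finset.mem_sdiff, Finset.mem_Icc]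
  constructor
  · rintro (⟨_, h⟩ | h)
    · exact h
    · exfalso
      obtain ⟨m', hm', hmm⟩ := Finset.mem_image.1 h
      obtain ⟨j, _, hj⟩ := mem_NegT.1 hm'
      rw [mem_blkSet] at hj
      omega
  · intro h
    exact Or.inl ⟨⟨h1, h2⟩, h⟩

theorem mem_VT_neg {m : ℤ} (h1 : 1 ≤ m) : -m ∈ VT n T ↔ m ∈ NegT T := by
  unfold VT
  rw [Finset.mem_union, Finset.mem_sdiff, Finset.mem_Icc]
  constructor
  · rintro (⟨h, _⟩ | h)
    · omega
    · obtain ⟨m', hm', hmm⟩ := Finset.mem_image.1 h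
      have : m = m' := by omega
      rwa [this]
  · intro h
    exact Or.inr (Finset.mem_image.2 ⟨m, h, rfl⟩)

theorem VT_abs (hn : n = 2*k - 1) (hk : 1 ≤ k) :
    (VT n T).image (fun v => |v|) = Finset.Icc (1:ℤ) (n:ℤ) := by
  ext x
  rw [Finset.mem_image, Finset.mem_Icc]
  constructor
  · rintro ⟨v, hv, rfl⟩
    unfold VT at hv
    rw [Finset.mem_union, Finset.mem_sdiff, Finset.mem_Icc] at hv
    rcases hv with ⟨⟨ha, hb⟩, _⟩ | hv
    · rw [abs_of_nonneg (by omega)]; omega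
    · obtain ⟨m', hm', rfl⟩ := Finset.mem_image.1 hv
      have := NegT_bounds hm' hn hk
      rw [abs_of_nonpos (by omega)]
      omega
  · intro ⟨hx1, hx2⟩
    by_cases h : x ∈ NegT T
    · exact ⟨-x, (mem_VT_neg hx1).2 h, by rw [abs_of_nonpos (by omega)]; omega⟩
    · exact ⟨x, (mem_VT_pos hx1 hx2).2 h, abs_of_nonneg (by omega)⟩

theorem VT_card (hn : n = 2*k - 1) (hk : 1 ≤ k) : (VT n T).card = n := by
  unfold VT
  have hdisj : Disjoint ((Finset.Icc (1:ℤ) (n:ℤ)) \ NegT T) ((NegT T).image (fun m => -m)) := by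
    rw [Finset.disjoint_left]
    intro v hv hv'
    rw [Finset.mem_sdiff, Finset.mem_Icc] at hv
    obtain ⟨m', hm', rfl⟩ := Finset.mem_image.1 hv'
    have := NegT_bounds hm' hn hk
    omega
  rw [Finset.card_union_of_disjoint hdisj,
    Finset.card_sdiff_of_subset (NegT_subset hn hk),
    Finset.card_image_of_injective _ neg_injective, Int.card_Icc]
  have hle := Finset.card_le_card (NegT_subset (T := T) hn hk)
  rw [Int.card_Icc] at hle
  omega

theorem Bcnt_VT {m : ℤ} (hm : 0 ≤ m) :
    Bcnt (VT n T) m = ((NegT T).filter (fun x => x ≤ m)).card := by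
  unfold Bcnt
  have himg : (VT n T).filter (fun v => -m ≤ v ∧ v < 0)
      = ((NegT T).filter (fun x => x ≤ m)).image (fun x => -x) := by
    ext v
    rw [Finset.mem_filter, Finset.mem_image]
    constructor
    · intro ⟨hv, h1, h2⟩
      refine ⟨-v, ?_, by ring⟩
      rw [Finset.mem_filter]
      have : -(-v) ∈ VT n T := by rw [neg_neg]; exact hv
      exact ⟨(mem_VT_neg (by omega)).1 this, by omega⟩
    · rintro ⟨x, hx, rfl⟩
      rw [Finset.mem_filter] at hx
      obtain ⟨hx1, hx2⟩ := hx
      obtain ⟨j, _, hj⟩ := mem_NegT.1 hx1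
      rw [mem_blkSet] at hj
      refine ⟨(mem_VT_neg (by omega)).2 hx1, by omega, by omega⟩
  rw [himg, Finset.card_image_of_injective _ neg_injective]

theorem card_blk_filter {j : ℕ} {m : ℤ} (h1 : 1 ≤ m) :
    ((blkSet j).filter (fun x => x ≤ m)).card % 2
      = if j = 0 then 1 else (if m = 2*(j:ℤ) then 1 else 0) := by
  by_cases h : j = 0
  · rw [if_pos h]
    unfold blkSet
    rw [if_pos h, Finset.filter_singleton, if_pos h1, Finset.card_singleton]
  · rw [if_neg h]
    unfold blkSet
    rw [if_neg h]
    have hins : ({2*(j:ℤ), 2*(j:ℤ)+1} : Finset ℤ) = insert (2*(j:ℤ)) {2*(j:ℤ)+1} := rfl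
    rw [hins, Finset.filter_insert, Finset.filter_singleton]
    by_cases ha : 2*(j:ℤ) ≤ m
    · by_cases hb : 2*(j:ℤ)+1 ≤ m
      · rw [if_pos ha, if_pos hb, if_neg (by omega : ¬ m = 2*(j:ℤ)),
          Finset.card_insert_of_notMem (by simp only [Finset.mem_singleton]; omega),
          Finset.card_singleton]
      · rw [if_pos ha, if_neg hb, if_pos (by omega : m = 2*(j:ℤ)),
          Finset.card_insert_of_notMem (Finset.notMem_empty _), Finset.card_empty]
    · rw [if_neg ha, if_neg (by omega : ¬ 2*(j:ℤ)+1 ≤ m),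
        if_neg (by omega : ¬ m = 2*(j:ℤ)), Finset.card_empty]

theorem Bcnt_VT_parity (hn : n = 2*k-1) (hk : 1 ≤ k) {m : ℤ}
    (h1 : 1 ≤ m) (h2 : m ≤ (n:ℤ)) {j0 : Fin k} (hj0 : (j0:ℕ) = 0) :
    (Bcnt (VT n T) m) % 2
      = ((if j0 ∈ T then 1 else 0) + (if m ∈ NegT T ∧ m % 2 = 0 then 1 else 0)) % 2 := by
  classical
  rw [Bcnt_VT (by omega)]
  unfold NegT
  rw [Finset.filter_biUnion,
    Finset.card_biUnion (fun x _ y _ hxy =>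
      Finset.disjoint_filter_filter (blkSet_disjoint (fun h => hxy (Fin.ext h)))),
    Finset.sum_nat_mod]
  by_cases hm : m % 2 = 1
  · have hterm : ∀ j ∈ T, ((blkSet j.1).filter (fun x => x ≤ m)).card % 2
        = if j = j0 then 1 else 0 := by
      intro j _
      rw [card_blk_filter h1]
      by_cases h : (j:ℕ) = 0
      · rw [if_pos h, if_pos (Fin.ext (by omega))]
      · rw [if_neg h, if_neg (by omega : ¬ m = 2*((j:ℕ):ℤ)),
          if_neg (fun hc => h (by rw [hc, hj0]))]
    rw [Finset.sum_congr rfl hterm, Finset.sum_ite_eq' T j0 (fun _ => 1)]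
    have hnot : (if (m ∈ T.biUnion fun j => blkSet j.1) ∧ m % 2 = 0 then 1 else 0) = (0:ℕ) := by
      rw [if_neg (by intro hc; omega)]
    rw [hnot, add_zero]
  · have hm0 : m % 2 = 0 := by omega
    have hjv : m.toNat / 2 < k := by omega
    set jm : Fin k := ⟨m.toNat / 2, hjv⟩ with hjmdef
    have hjm1 : 1 ≤ (jm:ℕ) := by show 1 ≤ m.toNat / 2; omega
    have hjmz : 2*((jm:ℕ):ℤ) = m := by show 2*((m.toNat / 2 : ℕ):ℤ) = m; omega
    have hterm : ∀ j ∈ T, ((blkSet j.1).filter (fun x => x ≤ m)).card % 2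
        = (if j = j0 then 1 else 0) + (if j = jm then 1 else 0) := by
      intro j _
      rw [card_blk_filter h1]
      by_cases h : (j:ℕ) = 0
      · rw [if_pos h, if_pos (Fin.ext (by omega)),
          if_neg (fun hc => by rw [hc] at h; omega : ¬ j = jm)]
      · rw [if_neg h]
        by_cases h3 : j = jm
        · rw [if_pos (by rw [h3]; omega : m = 2*((j:ℕ):ℤ)),
            if_neg (fun hc => h (by rw [hc]; exact hj0)), if_pos h3]
        · rw [if_neg (fun hc => h3 (Fin.ext (by omega)) : ¬ m = 2*((j:ℕ):ℤ)),
            if_neg (fun hc => h (by rw [hc]; exact hj0)), if_neg h3]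
    rw [Finset.sum_congr rfl hterm, Finset.sum_add_distrib,
      Finset.sum_ite_eq' T j0 (fun _ => 1), Finset.sum_ite_eq' T jm (fun _ => 1)]
    have hmem : m ∈ T.biUnion (fun j => blkSet j.1) ↔ jm ∈ T := by
      have := (NegT_mem_even (T := T) hjm1).1
      rw [hjmz] at this
      exact this
    have hsw : (if (m ∈ T.biUnion fun j => blkSet j.1) ∧ m % 2 = 0 then 1 else 0)
        = (if jm ∈ T then (1:ℕ) else 0) := by
      by_cases hT : jm ∈ T
      · rw [if_pos (⟨hmem.2 hT, hm0⟩ : (m ∈ T.biUnion fun j => blkSet ↑j) ∧ m % 2 = 0),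
          if_pos hT]
      · rw [if_neg (fun hc => hT (hmem.1 hc.1)), if_neg hT]
    rw [hsw]

end VT

section Build

/-- context hypotheses -/
structure Ctx (k p q n : ℕ) : Prop where
  hk : 2 ≤ k
  hp : 2 ≤ p
  hq : 2 ≤ q
  hpq : p + q = 2*k
  hn : n = 2*k - 1

variable {k p q n : ℕ} {T : Finset (Fin k)}

/-- the decreasing enumeration of `VT n T` -/
noncomputable def mkZ (n : ℕ) {k : ℕ} (T : Finset (Fin k)) (hc : (VT n T).card = n) : Fin n → ℤ :=
  fun i => (VT n T).orderEmbOfFin hc i.rev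

theorem mkZ_strictAnti (hc : (VT n T).card = n) : StrictAnti (mkZ n T hc) :=
  fun _ _ h => ((VT n T).orderEmbOfFin hc).strictMono (Fin.rev_lt_rev.2 h)

theorem mkZ_image (hc : (VT n T).card = n) : Finset.univ.image (mkZ n T hc) = VT n T := by
  ext v
  rw [Finset.mem_image]
  constructor
  · rintro ⟨i, _, rfl⟩
    exact Finset.orderEmbOfFin_mem _ hc _
  · intro hv
    have : v ∈ Set.range ((VT n T).orderEmbOfFin hc) := by
      rw [Finset.range_orderEmbOfFin]
      exact hv
    obtain ⟨j, hj⟩ := this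
    exact ⟨j.rev, Finset.mem_univ _, by unfold mkZ; rw [Fin.rev_rev]; exact hj⟩

theorem P_val (ctx : Ctx k p q n) (hT : 2 * T.card = p) {j0 : Fin k} (hj0 : (j0:ℕ) = 0)
    (hc : (VT n T).card = n) :
    Acnt (VT n T) n + (p - (if j0 ∈ T then 1 else 0)) = n := by
  obtain ⟨hk, hp, hq, hpq, hn⟩ := ctx
  have habs := VT_abs (T := T) hn (by omega)
  have hAB := L_AB habs hc (by omega : (0:ℤ) ≤ (n:ℤ)) (le_refl _)
  have hBN : Bcnt (VT n T) (n:ℤ) = (NegT T).card := by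
    rw [Bcnt_VT (by omega)]
    congr 1
    apply Finset.filter_true_of_mem
    intro x hx
    exact (NegT_bounds hx hn (by omega)).2
  have hcN := card_NegT (T := T) hj0
  by_cases hd : j0 ∈ T
  · rw [if_pos hd] at hcN ⊢; omega
  · rw [if_neg hd] at hcN ⊢; omega

theorem fact1 (ctx : Ctx k p q n) (hT : 2 * T.card = p) {j0 : Fin k} (hj0 : (j0:ℕ) = 0)
    (hc : (VT n T).card = n) (i : Fin n) (hi : (i:ℕ) + 2 ≤ q) :
    (q:ℤ) - 1 - (i:ℕ) ≤ mkZ n T hc i ∧ (mkZ n T hc i - ((q:ℤ) - 1 - (i:ℕ))) % 2 = 0 := by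
  obtain ⟨hk, hp, hq, hpq, hn⟩ := ctx
  have habs := VT_abs (T := T) hn (by omega)
  have hP := P_val ⟨hk, hp, hq, hpq, hn⟩ hT hj0 hc
  have hz := mkZ_strictAnti hc
  have him := mkZ_image hc
  have hpos : 0 < mkZ n T hc i := by
    rw [L_pos_iff habs hz him]
    split_ifs at hP <;> omega
  set m := mkZ n T hc i with hm
  have hrank := L_rank_pos habs hz him hm.symm hpos
  have hmem : m ∈ VT n T := by rw [← him]; exact Finset.mem_image_of_mem _ (Finset.mem_univ _)
  have hmabs := L_absmem habs hmem
  rw [abs_of_pos hpos] at hmabs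
  have hAle := L_A_le (W := VT n T) (m := m) (by omega)
  have hAB := L_AB habs hc (by omega : (0:ℤ) ≤ m) (by omega)
  have hBpar := Bcnt_VT_parity (T := T) hn (by omega) (by omega : 1 ≤ m) (by omega) hj0
  have hnotneg : m ∉ NegT T := by
    intro hcon
    have := (mem_VT_neg (n := n) (T := T) (m := m) (by omega)).2 hcon
    exact L_notboth habs hc (by omega : (1:ℤ) ≤ m) hmem this
  rw [if_neg (show ¬(m ∈ NegT T ∧ m % 2 = 0) from fun hcc => hnotneg hcc.1)] at hBpar
  by_cases hd : j0 ∈ T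
  · rw [if_pos hd] at hP hBpar; omega
  · rw [if_neg hd] at hP hBpar; omega

theorem fact2 (ctx : Ctx k p q n) (hT : 2 * T.card = p) {j0 : Fin k} (hj0 : (j0:ℕ) = 0)
    (hc : (VT n T).card = n) (i : Fin n) (hi : (i:ℕ) + 1 = q) :
    mkZ n T hc i % 2 = 0 ∧ mkZ n T hc i ≠ 0 ∧ (0 < mkZ n T hc i ↔ j0 ∈ T) := by
  obtain ⟨hk, hp, hq, hpq, hn⟩ := ctx
  have habs := VT_abs (T := T) hn (by omega)
  have hP := P_val ⟨hk, hp, hq, hpq, hn⟩ hT hj0 hc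
  have hz := mkZ_strictAnti hc
  have him := mkZ_image hc
  set m := mkZ n T hc i with hm
  have hmem : m ∈ VT n T := by rw [← him]; exact Finset.mem_image_of_mem _ (Finset.mem_univ _)
  have hmabs := L_absmem habs hmem
  have hne : m ≠ 0 := by intro h0; rw [h0] at hmabs; simp at hmabs
  have hposiff := L_pos_iff habs hz him i
  rw [← hm] at hposiff
  by_cases hd : j0 ∈ T
  · rw [if_pos hd] at hP
    have hpos : 0 < m := by rw [hposiff]; omega
    have hrank := L_rank_pos habs hz him hm.symm hpos
    rw [abs_of_pos hpos] at hmabs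
    have hAB := L_AB habs hc (by omega : (0:ℤ) ≤ m) (by omega)
    have hBpar := Bcnt_VT_parity (T := T) hn (by omega) (by omega : 1 ≤ m) (by omega) hj0
    have hnotneg : m ∉ NegT T := by
      intro hcon
      have := (mem_VT_neg (n := n) (T := T) (m := m) (by omega)).2 hcon
      exact L_notboth habs hc (by omega : (1:ℤ) ≤ m) hmem this
    rw [if_pos hd,
      if_neg (show ¬(m ∈ NegT T ∧ m % 2 = 0) from fun hcc => hnotneg hcc.1)] at hBpar
    refine ⟨by omega, hne, by tauto⟩
  · rw [if_neg hd] at hP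
    have hneg : m < 0 := by
      rcases lt_trichotomy m 0 with h | h | h
      · exact h
      · exact absurd h hne
      · rw [hposiff] at h; omega
    rw [abs_of_neg hneg] at hmabs
    have hrank := L_rank_neg habs hz him (show mkZ n T hc i = -(-m) by omega) (by omega)
    have hBpar := Bcnt_VT_parity (T := T) hn (by omega) (by omega : 1 ≤ -m) (by omega) hj0
    have hB1 : Bcnt (VT n T) (-m) = 1 := by omega
    rw [if_neg hd, hB1] at hBpar
    have : (-m) % 2 = 0 := by
      by_contra hcon
      rw [if_neg (show ¬((-m) ∈ NegT T ∧ (-m) % 2 = 0) from fun hcc => hcon hcc.2)] at hBpar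
      omega
    exact ⟨by omega, hne, by constructor <;> intro hcc <;> [omega; exact absurd hcc hd]⟩

theorem fact3 (ctx : Ctx k p q n) (hT : 2 * T.card = p) {j0 : Fin k} (hj0 : (j0:ℕ) = 0)
    (hc : (VT n T).card = n) (i : Fin n) (j : ℕ) (hij : (i:ℕ) = q + j) (hj : j + 2 ≤ p) :
    mkZ n T hc i ≤ -(j:ℤ) - 1 ∧ (mkZ n T hc i + (j:ℤ) + 1) % 2 = 0 := by
  obtain ⟨hk, hp, hq, hpq, hn⟩ := ctx
  have habs := VT_abs (T := T) hn (by omega)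
  have hP := P_val ⟨hk, hp, hq, hpq, hn⟩ hT hj0 hc
  have hz := mkZ_strictAnti hc
  have him := mkZ_image hc
  set m := mkZ n T hc i with hm
  have hmem : m ∈ VT n T := by rw [← him]; exact Finset.mem_image_of_mem _ (Finset.mem_univ _)
  have hmabs := L_absmem habs hmem
  have hne : m ≠ 0 := by intro h0; rw [h0] at hmabs; simp at hmabs
  have hposiff := L_pos_iff habs hz him i
  rw [← hm] at hposiff
  have hneg : m < 0 := by
    rcases lt_trichotomy m 0 with h | h | h
    · exact h
    · exact absurd h hne
    · rw [hposiff] at h; split_ifs at hP <;> omega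
  rw [abs_of_neg hneg] at hmabs
  have hrank := L_rank_neg habs hz him (show mkZ n T hc i = -(-m) by omega) (by omega)
  have hBpar := Bcnt_VT_parity (T := T) hn (by omega) (by omega : 1 ≤ -m) (by omega) hj0
  have hBle := L_B_le (W := VT n T) (m := -m) (by omega)
  have hmneg : -m ∈ NegT T := by
    apply (mem_VT_neg (n := n) (T := T) (m := -m) (by omega)).1
    rw [neg_neg]
    exact hmem
  by_cases hd : j0 ∈ T
  · rw [if_pos hd] at hP hBpar
    by_cases hpar : (-m) % 2 = 0
    · rw [if_pos (show (-m) ∈ NegT T ∧ (-m) % 2 = 0 from ⟨hmneg, hpar⟩)] at hBpar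
      omega
    · rw [if_neg (show ¬((-m) ∈ NegT T ∧ (-m) % 2 = 0) from fun hcc => hpar hcc.2)] at hBpar
      omega
  · rw [if_neg hd] at hP hBpar
    by_cases hpar : (-m) % 2 = 0
    · rw [if_pos (show (-m) ∈ NegT T ∧ (-m) % 2 = 0 from ⟨hmneg, hpar⟩)] at hBpar
      omega
    · rw [if_neg (show ¬((-m) ∈ NegT T ∧ (-m) % 2 = 0) from fun hcc => hpar hcc.2)] at hBpar
      omega

/-- the constructed solution -/
noncomputable def mkSol (ctx : Ctx k p q n) (hT : 2 * T.card = p) {j0 : Fin k} (hj0 : (j0:ℕ) = 0)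
    (hc : (VT n T).card = n)
    (hp : 2 ≤ p) (hq : 2 ≤ q) (hn' : q - 1 + p = n) : RhoSol00 n p q hp hq hn' where
  z := mkZ n T hc
  b := fun i => (mkZ n T hc ⟨i.1, by have := i.isLt; omega⟩ - ((q:ℤ) - 1 - (i.1:ℕ))) / 2
  a := fun m => (-(((p - 2 - m.1 : ℕ)):ℤ) - 1
      - mkZ n T hc ⟨q + (p - 2 - m.1), by have := m.isLt; omega⟩) / 2
  c := -(mkZ n T hc ⟨q - 1, by omega⟩) / 2
  z_anti := mkZ_strictAnti hc
  z_abs := by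
    have h1 : Finset.univ.image (fun i => |mkZ n T hc i|)
        = (Finset.univ.image (mkZ n T hc)).image (fun v => |v|) := by
      rw [Finset.image_image]
      rfl
    rw [h1, mkZ_image, VT_abs (T := T) ctx.hn (by have := ctx.hk; omega)]
  b_anti := by
    intro i i' hii
    dsimp only
    have h1 := fact1 ctx hT hj0 hc ⟨i.1, by have := i.isLt; omega⟩
      (by have := i.isLt; simp only [Fin.val_mk]; omega)
    have h2 := fact1 ctx hT hj0 hc ⟨i'.1, by have := i'.isLt; omega⟩
      (by have := i'.isLt; simp only [Fin.val_mk]; omega)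
    have hgap := L_gap (mkZ_strictAnti hc)
      (show (⟨i.1, by have := i.isLt; omega⟩ : Fin n) ≤ ⟨i'.1, by have := i'.isLt; omega⟩
        from by rw [Fin.mk_le_mk]; exact hii)
    simp only [Fin.val_mk] at h1 h2 hgap
    omega
  a_anti := by
    intro m m' hmm
    dsimp only
    have hm1 := m.isLt
    have hm2 := m'.isLt
    have h1 := fact3 ctx hT hj0 hc ⟨q + (p - 2 - m.1), by omega⟩ (p - 2 - m.1)
      (by simp only [Fin.val_mk]) (by omega)
    have h2 := fact3 ctx hT hj0 hc ⟨q + (p - 2 - m'.1), by omega⟩ (p - 2 - m'.1)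
      (by simp only [Fin.val_mk]) (by omega)
    have hgap := L_gap (mkZ_strictAnti hc)
      (show (⟨q + (p - 2 - m'.1), by omega⟩ : Fin n) ≤ ⟨q + (p - 2 - m.1), by omega⟩
        from by rw [Fin.mk_le_mk]; omega)
    simp only [Fin.val_mk] at h1 h2 hgap
    omega
  b_nonneg := by
    intro i
    have h1 := fact1 ctx hT hj0 hc ⟨i.1, by have := i.isLt; omega⟩
      (by have := i.isLt; simp only [Fin.val_mk]; omega)
    simp only [Fin.val_mk] at h1
    omega
  a_nonneg := by
    intro m
    have hm1 := m.isLt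
    have h1 := fact3 ctx hT hj0 hc ⟨q + (p - 2 - m.1), by omega⟩ (p - 2 - m.1)
      (by simp only [Fin.val_mk]) (by omega)
    omega
  c_ne := by
    have h1 := fact2 ctx hT hj0 hc ⟨q - 1, by omega⟩ (by simp only [Fin.val_mk]; omega)
    omega
  hzb := by
    intro i
    have h1 := fact1 ctx hT hj0 hc ⟨i.1, by have := i.isLt; omega⟩
      (by have := i.isLt; simp only [Fin.val_mk]; omega)
    simp only [Fin.val_mk] at h1 ⊢
    omega
  hzc := by
    have h1 := fact2 ctx hT hj0 hc ⟨q - 1, by omega⟩ (by simp only [Fin.val_mk]; omega)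
    omega
  hza := by
    intro j
    have hj1 := j.isLt
    have hred : p - 2 - (p - 2 - j.1) = j.1 := by omega
    have h1 := fact3 ctx hT hj0 hc ⟨q + j.1, by omega⟩ j.1
      (by simp only [Fin.val_mk]) (by omega)
    dsimp only
    simp only [hred]
    omega
  side := by
    have h1 := fact2 ctx hT hj0 hc ⟨q - 1, by omega⟩ (by simp only [Fin.val_mk]; omega)
    by_cases hd : j0 ∈ T
    · right
      have hpos : 0 < mkZ n T hc ⟨q - 1, by omega⟩ := h1.2.2.2 hd
      have h2 := fact1 ctx hT hj0 hc ⟨q - 2, by omega⟩ (by simp only [Fin.val_mk]; omega)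
      have hgap := L_gap (mkZ_strictAnti hc)
        (show (⟨q - 2, by omega⟩ : Fin n) ≤ ⟨q - 1, by omega⟩
          from by rw [Fin.mk_le_mk]; omega)
      simp only [Fin.val_mk] at h2 hgap
      dsimp only
      omega
    · left
      have hneg : mkZ n T hc ⟨q - 1, by omega⟩ < 0 := by
        rcases lt_trichotomy (mkZ n T hc ⟨q - 1, by omega⟩) 0 with h | h | h
        · exact h
        · exact absurd h h1.2.1
        · exact absurd (h1.2.2.1 h) hd
      have hred0 : p - 2 - (p - 2) = 0 := by omega
      have h2 := fact3 ctx hT hj0 hc ⟨q + 0, by omega⟩ 0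
        (by simp only [Fin.val_mk]) (by omega)
      have hgap := L_gap (mkZ_strictAnti hc)
        (show (⟨q - 1, by omega⟩ : Fin n) ≤ ⟨q + 0, by omega⟩
          from by rw [Fin.mk_le_mk]; omega)
      simp only [Fin.val_mk] at h2 hgap
      dsimp only
      simp only [hred0]
      omega

end Build

section Solve

variable {k p q n : ℕ} {hp : 2 ≤ p} {hq : 2 ≤ q} {hn' : q - 1 + p = n}

/-- value set of a solution -/
def solW (s : RhoSol00 n p q hp hq hn') : Finset ℤ := Finset.univ.image s.z

/-- case indicator of a solution -/
def solD (s : RhoSol00 n p q hp hq hn') : ℕ := if s.c < 0 then 1 else 0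

theorem sol_habs (s : RhoSol00 n p q hp hq hn') :
    (solW s).image (fun v => |v|) = Finset.Icc (1:ℤ) (n:ℤ) := by
  unfold solW
  rw [Finset.image_image]
  exact s.z_abs

theorem sol_hc (s : RhoSol00 n p q hp hq hn') : (solW s).card = n :=
  L_card s.z_anti rfl

theorem sol_P (ctx : Ctx k p q n) (s : RhoSol00 n p q hp hq hn') :
    Acnt (solW s) n = q - 1 + solD s := by
  obtain ⟨hkk, hpp, hqq, hpq, hn⟩ := ctx
  have habs := sol_habs s
  have hz := s.z_anti
  have h1 := s.hzb ⟨q-2, by omega⟩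
  have hb := s.b_nonneg ⟨q-2, by omega⟩
  have h2 := s.hzc
  have h3 := s.hza ⟨0, by omega⟩
  have ha := s.a_nonneg ⟨p-2, by omega⟩
  simp only [Fin.val_mk, Nat.sub_zero, Nat.cast_zero] at h1 h3
  have hpos2 := L_pos_iff habs hz rfl ⟨q-2, by omega⟩
  have hpos3 := L_pos_iff habs hz rfl ⟨q-1, by omega⟩
  have hpos4 := L_pos_iff habs hz rfl ⟨q+0, by omega⟩
  simp only [Fin.val_mk] at hpos2 hpos3 hpos4
  have hc := s.c_ne
  unfold solD
  by_cases hcs : s.c < 0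
  · rw [if_pos hcs]
    have hA := hpos3.1 (by omega)
    have hB : ¬ (0 < s.z ⟨q+0, by omega⟩) := by omega
    rw [hpos4] at hB
    omega
  · rw [if_neg hcs]
    have hA := hpos2.1 (by omega)
    have hB : ¬ (0 < s.z ⟨q-1, by omega⟩) := by omega
    rw [hpos3] at hB
    omega

theorem sol_U1 (ctx : Ctx k p q n) (s : RhoSol00 n p q hp hq hn') {m : ℤ}
    (h1 : 1 ≤ m) (h2 : m ≤ (n:ℤ)) (hm : m ∈ solW s) :
    Bcnt (solW s) m % 2 = solD s % 2 := by
  obtain ⟨hkk, hpp, hqq, hpq, hn⟩ := ctx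
  have habs := sol_habs s
  have hz := s.z_anti
  have hcard := sol_hc s
  have hP := sol_P ⟨hkk, hpp, hqq, hpq, hn⟩ s
  obtain ⟨i, hi⟩ := L_surj (z := s.z) rfl hm
  have hpos : 0 < s.z i := by omega
  have hiA := (L_pos_iff habs hz rfl i).1 hpos
  have hrank := L_rank_pos habs hz rfl hi (by omega)
  have hAB := L_AB habs hcard (by omega : (0:ℤ) ≤ m) h2
  have hcne := s.c_ne
  by_cases hcs : s.c < 0
  · have hd : solD s = 1 := if_pos hcs
    by_cases hiq : (i:ℕ) + 2 ≤ q
    · have hzb := s.hzb ⟨i.1, by omega⟩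
      simp only [Fin.val_mk, Fin.eta] at hzb
      omega
    · have hzc := s.hzc
      have hix : (⟨q - 1, by omega⟩ : Fin n) = i := Fin.ext (by simp only [Fin.val_mk]; omega)
      rw [hix] at hzc
      omega
  · have hd : solD s = 0 := if_neg hcs
    have hzb := s.hzb ⟨i.1, by omega⟩
    simp only [Fin.val_mk, Fin.eta] at hzb
    omega

theorem sol_U2 (ctx : Ctx k p q n) (s : RhoSol00 n p q hp hq hn') {m : ℤ}
    (h1 : 1 ≤ m) (h2 : m ≤ (n:ℤ)) (hm : -m ∈ solW s) :
    (m + Bcnt (solW s) m) % 2 = (1 + solD s) % 2 := by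
  obtain ⟨hkk, hpp, hqq, hpq, hn⟩ := ctx
  have habs := sol_habs s
  have hz := s.z_anti
  have hcard := sol_hc s
  have hP := sol_P ⟨hkk, hpp, hqq, hpq, hn⟩ s
  obtain ⟨i, hi⟩ := L_surj (z := s.z) rfl hm
  have hneg : s.z i < 0 := by omega
  have hiA : ¬ ((i:ℕ) < Acnt (solW s) n) := by
    rw [← L_pos_iff habs hz rfl i]
    omega
  have hrank := L_rank_neg habs hz rfl hi (by omega)
  have hile := i.isLt
  have hcne := s.c_ne
  by_cases hcs : s.c < 0
  · have hd : solD s = 1 := if_pos hcs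
    have hiq : q ≤ (i:ℕ) := by omega
    have hza := s.hza ⟨i.1 - q, by omega⟩
    simp only [Fin.val_mk] at hza
    have hieq : i = ⟨q + ((i:ℕ) - q), by omega⟩ := Fin.ext (by simp only [Fin.val_mk]; omega)
    rw [hieq] at hi
    omega
  · have hd : solD s = 0 := if_neg hcs
    by_cases hiq : (i:ℕ) = q - 1
    · have hzc := s.hzc
      have hix : (⟨q - 1, by omega⟩ : Fin n) = i := Fin.ext (by simp only [Fin.val_mk]; omega)
      rw [hix] at hzc
      omega
    · have hza := s.hza ⟨i.1 - q, by omega⟩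
      simp only [Fin.val_mk] at hza
      have hieq : i = ⟨q + ((i:ℕ) - q), by omega⟩ := Fin.ext (by simp only [Fin.val_mk]; omega)
      rw [hieq] at hi
      omega

theorem sol_IND (ctx : Ctx k p q n) (s : RhoSol00 n p q hp hq hn') :
    ∀ t : ℕ, t < k → Bcnt (solW s) (2*(t:ℤ)+1) % 2 = solD s % 2 := by
  have habs := sol_habs s
  have hcard := sol_hc s
  obtain ⟨hkk, hpp, hqq, hpq, hn⟩ := ctx
  intro t
  induction t with
  | zero =>
    intro _
    rw [show (2*((0:ℕ):ℤ)+1) = 1 by norm_num]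
    have hstep := L_Bstep (W := solW s) (m := (1:ℤ)) (by norm_num)
    rw [show (1:ℤ)-1 = 0 by norm_num, L_B0] at hstep
    by_cases hmem : (-1:ℤ) ∈ solW s
    · rw [if_pos hmem] at hstep
      have hU := sol_U2 ⟨hkk, hpp, hqq, hpq, hn⟩ s (le_refl 1) (by omega) (by
        rw [show -(1:ℤ) = -1 by norm_num]; exact hmem)
      omega
    · rw [if_neg hmem] at hstep
      have hone := L_one habs hcard (le_refl (1:ℤ)) (by omega)
      have hmem2 : (1:ℤ) ∈ solW s := by
        rcases hone with h | h
        · exact h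
        · exact absurd (by rw [show -(1:ℤ) = -1 by norm_num] at h; exact h) hmem
      have hU := sol_U1 ⟨hkk, hpp, hqq, hpq, hn⟩ s (le_refl 1) (by omega) hmem2
      omega
  | succ t ih =>
    intro hlt
    have ih' := ih (by omega)
    rw [show (2*((t+1:ℕ):ℤ)+1) = 2*(t:ℤ)+3 by push_cast; ring]
    have hs2 := L_Bstep (W := solW s) (m := 2*(t:ℤ)+3) (by omega)
    rw [show 2*(t:ℤ)+3-1 = 2*(t:ℤ)+2 by ring] at hs2
    have hs1 := L_Bstep (W := solW s) (m := 2*(t:ℤ)+2) (by omega)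
    rw [show 2*(t:ℤ)+2-1 = 2*(t:ℤ)+1 by ring] at hs1
    have hb2n : (2*(t:ℤ)+3) ≤ (n:ℤ) := by omega
    by_cases hb1 : -(2*(t:ℤ)+2) ∈ solW s
    · rw [if_pos hb1] at hs1
      have hU1 := sol_U2 ⟨hkk, hpp, hqq, hpq, hn⟩ s (m := 2*(t:ℤ)+2) (by omega) (by omega) hb1
      by_cases hb2 : -(2*(t:ℤ)+3) ∈ solW s
      · rw [if_pos hb2] at hs2
        have hU2 := sol_U2 ⟨hkk, hpp, hqq, hpq, hn⟩ s (m := 2*(t:ℤ)+3) (by omega) (by omega) hb2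
        omega
      · rw [if_neg hb2] at hs2
        have hone := L_one habs hcard (m := 2*(t:ℤ)+3) (by omega) (by omega)
        have hmem2 : (2*(t:ℤ)+3) ∈ solW s := by tauto
        have hU2 := sol_U1 ⟨hkk, hpp, hqq, hpq, hn⟩ s (by omega) (by omega) hmem2
        omega
    · rw [if_neg hb1] at hs1
      have hone := L_one habs hcard (m := 2*(t:ℤ)+2) (by omega) (by omega)
      have hmem1 : (2*(t:ℤ)+2) ∈ solW s := by tauto
      have hU1 := sol_U1 ⟨hkk, hpp, hqq, hpq, hn⟩ s (by omega) (by omega) hmem1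
      by_cases hb2 : -(2*(t:ℤ)+3) ∈ solW s
      · rw [if_pos hb2] at hs2
        have hU2 := sol_U2 ⟨hkk, hpp, hqq, hpq, hn⟩ s (m := 2*(t:ℤ)+3) (by omega) (by omega) hb2
        omega
      · rw [if_neg hb2] at hs2
        have hone2 := L_one habs hcard (m := 2*(t:ℤ)+3) (by omega) (by omega)
        have hmem2 : (2*(t:ℤ)+3) ∈ solW s := by tauto
        have hU2 := sol_U1 ⟨hkk, hpp, hqq, hpq, hn⟩ s (by omega) (by omega) hmem2
        omega

theorem sol_PAIR (ctx : Ctx k p q n) (s : RhoSol00 n p q hp hq hn')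
    (t : ℕ) (h1 : 1 ≤ t) (h2 : t < k) :
    (-(2*(t:ℤ)) ∈ solW s ↔ -(2*(t:ℤ)+1) ∈ solW s) := by
  have habs := sol_habs s
  have hcard := sol_hc s
  obtain ⟨hkk, hpp, hqq, hpq, hn⟩ := ctx
  have iha := sol_IND ⟨hkk, hpp, hqq, hpq, hn⟩ s (t-1) (by omega)
  rw [show (2*((t-1:ℕ):ℤ)+1) = 2*(t:ℤ)-1 by omega] at iha
  have ihb := sol_IND ⟨hkk, hpp, hqq, hpq, hn⟩ s t h2
  have hs1 := L_Bstep (W := solW s) (m := 2*(t:ℤ)) (by omega)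
  have hs2 := L_Bstep (W := solW s) (m := 2*(t:ℤ)+1) (by omega)
  rw [show 2*(t:ℤ)+1-1 = 2*(t:ℤ) by ring] at hs2
  have hbnd : 2*(t:ℤ)+1 ≤ (n:ℤ) := by omega
  by_cases hb1 : -(2*(t:ℤ)) ∈ solW s <;> by_cases hb2 : -(2*(t:ℤ)+1) ∈ solW s
  · exact iff_of_true hb1 hb2
  · exfalso
    rw [if_pos hb1] at hs1
    rw [if_neg hb2] at hs2
    have hU1 := sol_U2 ⟨hkk, hpp, hqq, hpq, hn⟩ s (m := 2*(t:ℤ)) (by omega) (by omega) hb1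
    have hone := L_one habs hcard (m := 2*(t:ℤ)+1) (by omega) (by omega)
    have hmem2 : (2*(t:ℤ)+1) ∈ solW s := by tauto
    have hU2 := sol_U1 ⟨hkk, hpp, hqq, hpq, hn⟩ s (by omega) (by omega) hmem2
    omega
  · exfalso
    rw [if_neg hb1] at hs1
    rw [if_pos hb2] at hs2
    have hone := L_one habs hcard (m := 2*(t:ℤ)) (by omega) (by omega)
    have hmem1 : (2*(t:ℤ)) ∈ solW s := by tauto
    have hU1 := sol_U1 ⟨hkk, hpp, hqq, hpq, hn⟩ s (by omega) (by omega) hmem1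
    have hU2 := sol_U2 ⟨hkk, hpp, hqq, hpq, hn⟩ s (m := 2*(t:ℤ)+1) (by omega) (by omega) hb2
    omega
  · exact iff_of_false hb1 hb2

theorem sol_ONE (ctx : Ctx k p q n) (s : RhoSol00 n p q hp hq hn') :
    ((-1:ℤ) ∈ solW s) ↔ s.c < 0 := by
  obtain ⟨hkk, hpp, hqq, hpq, hn⟩ := ctx
  have ind0 := sol_IND ⟨hkk, hpp, hqq, hpq, hn⟩ s 0 (by omega)
  rw [show (2*((0:ℕ):ℤ)+1) = 1 by norm_num] at ind0
  have hstep := L_Bstep (W := solW s) (m := (1:ℤ)) (by norm_num)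
  rw [show (1:ℤ)-1 = 0 by norm_num, L_B0] at hstep
  constructor
  · intro h
    by_contra hcs
    have hd : solD s = 0 := if_neg hcs
    rw [if_pos (by rw [show -(1:ℤ) = -1 by norm_num]; exact h)] at hstep
    omega
  · intro hcs
    by_contra h
    have hd : solD s = 1 := if_pos hcs
    rw [if_neg (by rw [show -(1:ℤ) = -1 by norm_num]; exact h)] at hstep
    omega

/-- the block-choice set of a solution -/
def Tsol (k : ℕ) (s : RhoSol00 n p q hp hq hn') : Finset (Fin k) :=
  Finset.univ.filter
    (fun j => ((j:ℕ) = 0 ∧ s.c < 0) ∨ ((j:ℕ) ≠ 0 ∧ -(2*((j:ℕ):ℤ)) ∈ solW s))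

theorem mem_Tsol {s : RhoSol00 n p q hp hq hn'} {j : Fin k} :
    j ∈ Tsol k s ↔ (((j:ℕ) = 0 ∧ s.c < 0) ∨ ((j:ℕ) ≠ 0 ∧ -(2*((j:ℕ):ℤ)) ∈ solW s)) := by
  unfold Tsol
  simp

theorem sol_negchar (ctx : Ctx k p q n) (s : RhoSol00 n p q hp hq hn') {m : ℤ}
    (h1 : 1 ≤ m) (h2 : m ≤ (n:ℤ)) :
    ((-m) ∈ solW s) ↔ m ∈ NegT (Tsol k s) := by
  obtain ⟨hkk, hpp, hqq, hpq, hn⟩ := ctx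
  by_cases hm1 : m = 1
  · subst hm1
    have hj0 : ((⟨0, by omega⟩ : Fin k) : ℕ) = 0 := rfl
    rw [NegT_mem_one (T := Tsol k s) hj0, mem_Tsol]
    have hone := sol_ONE ⟨hkk, hpp, hqq, hpq, hn⟩ s
    constructor
    · intro h
      exact Or.inl ⟨hj0, hone.1 h⟩
    · rintro (⟨_, h⟩ | ⟨hne, _⟩)
      · exact hone.2 h
      · exact absurd hj0 hne
  · have hm2' : 2 ≤ m := by omega
    set jF : Fin k := ⟨m.toNat / 2, by omega⟩ with hjF
    have hj1 : 1 ≤ (jF:ℕ) := by show 1 ≤ m.toNat / 2; omega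
    have hTmem : jF ∈ Tsol k s ↔ -(2*((jF:ℕ):ℤ)) ∈ solW s := by
      rw [mem_Tsol]
      constructor
      · rintro (⟨h, _⟩ | ⟨_, h⟩)
        · omega
        · exact h
      · intro h
        exact Or.inr ⟨by omega, h⟩
    by_cases hpar : m % 2 = 0
    · have hveq : (2*((jF:ℕ):ℤ)) = m := by show (2*((m.toNat / 2 : ℕ):ℤ)) = m; omega
      have hE := (NegT_mem_even (T := Tsol k s) hj1).1
      rw [hveq] at hE
      rw [hE, hTmem, hveq]
    · have hveq : (2*((jF:ℕ):ℤ)+1) = m := by show (2*((m.toNat / 2 : ℕ):ℤ)+1) = m; omega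
      have hE := (NegT_mem_even (T := Tsol k s) hj1).2
      rw [hveq] at hE
      have hpair := sol_PAIR ⟨hkk, hpp, hqq, hpq, hn⟩ s (jF:ℕ) hj1 jF.isLt
      rw [hveq] at hpair
      rw [hE, hTmem, ← hpair]

theorem sol_W_eq (ctx : Ctx k p q n) (s : RhoSol00 n p q hp hq hn') :
    solW s = VT n (Tsol k s) := by
  have habs := sol_habs s
  have hcard := sol_hc s
  obtain ⟨hkk, hpp, hqq, hpq, hn⟩ := ctx
  ext v
  constructor
  · intro hv
    have hb := L_absmem habs hv
    rcases abs_cases v with ⟨he, hsgn⟩ | ⟨he, hsgn⟩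
    · rw [he] at hb
      apply (mem_VT_pos (T := Tsol k s) (by omega) (by omega)).2
      intro hcon
      have : -v ∈ solW s :=
        (sol_negchar ⟨hkk, hpp, hqq, hpq, hn⟩ s (by omega) (by omega)).2 hcon
      exact L_notboth habs hcard (by omega : (1:ℤ) ≤ v) hv this
    · rw [he] at hb
      have hneg : -(-v) ∈ solW s := by rw [neg_neg]; exact hv
      have hcon := (sol_negchar ⟨hkk, hpp, hqq, hpq, hn⟩ s (m := -v) (by omega) (by omega)).1 hneg
      have := (mem_VT_neg (n := n) (T := Tsol k s) (m := -v) (by omega)).2 hcon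
      rwa [neg_neg] at this
  · intro hv
    unfold VT at hv
    rw [Finset.mem_union, Finset.mem_sdiff, Finset.mem_Icc] at hv
    rcases hv with ⟨⟨ha1, ha2⟩, hnot⟩ | himg
    · rcases L_one habs hcard ha1 ha2 with h | h
      · exact h
      · exact absurd ((sol_negchar ⟨hkk, hpp, hqq, hpq, hn⟩ s ha1 ha2).1 h) hnot
    · obtain ⟨m', hm', rfl⟩ := Finset.mem_image.1 himg
      have hbb := NegT_bounds hm' hn (by omega)
      exact (sol_negchar ⟨hkk, hpp, hqq, hpq, hn⟩ s (by omega) (by omega)).2 hm'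

theorem sol_Tcard (ctx : Ctx k p q n) (s : RhoSol00 n p q hp hq hn') :
    2 * (Tsol k s).card = p := by
  have habs := sol_habs s
  have hcard := sol_hc s
  obtain ⟨hkk, hpp, hqq, hpq, hn⟩ := ctx
  have hP := sol_P ⟨hkk, hpp, hqq, hpq, hn⟩ s
  have hAB := L_AB habs hcard (by omega : (0:ℤ) ≤ (n:ℤ)) (le_refl _)
  have hBN : Bcnt (solW s) (n:ℤ) = (NegT (Tsol k s)).card := by
    rw [sol_W_eq ⟨hkk, hpp, hqq, hpq, hn⟩ s, Bcnt_VT (by omega)]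
    congr 1
    apply Finset.filter_true_of_mem
    intro x hx
    exact (NegT_bounds hx hn (by omega)).2
  have hj0 : ((⟨0, by omega⟩ : Fin k) : ℕ) = 0 := rfl
  have hcN := card_NegT (T := Tsol k s) hj0
  have hj0T : (⟨0, by omega⟩ : Fin k) ∈ Tsol k s ↔ s.c < 0 := by
    rw [mem_Tsol]
    simp [hj0]
  unfold solD at hP
  by_cases hcs : s.c < 0
  · rw [if_pos (hj0T.2 hcs)] at hcN
    rw [if_pos hcs] at hP
    omega
  · rw [if_neg (fun hcc => hcs (hj0T.1 hcc))] at hcN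
    rw [if_neg hcs] at hP
    omega

theorem sol_ext {s t : RhoSol00 n p q hp hq hn'} (hzz : s.z = t.z) : s = t := by
  obtain ⟨z1, b1, a1, c1, p1, p2, p3, p4, p5, p6, p7, p8, p9, p10, p11⟩ := s
  obtain ⟨z2, b2, a2, c2, r1, r2, r3, r4, r5, r6, r7, r8, r9, r10, r11⟩ := t
  simp only at hzz
  subst hzz
  have hb : b1 = b2 := by
    funext i
    have e1 := p8 i
    have e2 := r8 i
    omega
  have ha : a1 = a2 := by
    funext mi
    have hmi := mi.isLt
    have e1 := p10 ⟨p - 2 - mi.1, by omega⟩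
    have e2 := r10 ⟨p - 2 - mi.1, by omega⟩
    simp only [Fin.val_mk] at e1 e2
    have hix : mi = ⟨p - 2 - (p - 2 - mi.1), by omega⟩ :=
      Fin.ext (by simp only [Fin.val_mk]; omega)
    rw [hix]
    omega
  have hc : c1 = c2 := by
    have e1 := p9
    have e2 := r9
    omega
  subst hb
  subst ha
  subst hc
  rfl

end Solve

section Inj

variable {k n : ℕ}

theorem VT_inj (hn : n = 2*k-1) (hk : 1 ≤ k) {T1 T2 : Finset (Fin k)}
    (h : VT n T1 = VT n T2) : T1 = T2 := by
  ext j
  by_cases hj : (j:ℕ) = 0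
  · rw [← NegT_mem_one (T := T1) hj, ← NegT_mem_one (T := T2) hj,
      ← mem_VT_neg (n := n) (T := T1) (m := 1) (le_refl 1),
      ← mem_VT_neg (n := n) (T := T2) (m := 1) (le_refl 1), h]
  · have hj1 : 1 ≤ (j:ℕ) := by omega
    rw [← (NegT_mem_even (T := T1) hj1).1, ← (NegT_mem_even (T := T2) hj1).1,
      ← mem_VT_neg (n := n) (T := T1) (m := 2*((j:ℕ):ℤ)) (by omega),
      ← mem_VT_neg (n := n) (T := T2) (m := 2*((j:ℕ):ℤ)) (by omega), h]

end Inj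

end Rho14

/-- Theorem on `X'(p,q;0,0)` with `p, q` even: the number of solutions equals
`C(k, p/2) = C(k, q/2)` (here `n = 2k−1`, `p + q = 2k`, `p, q` even positive). -/
theorem stmt14 (n k p q : ℕ) (hk : 1 ≤ k) (hn : n = 2 * k - 1)
    (hppos : 0 < p) (hqpos : 0 < q) (hpq : p + q = 2 * k)
    (hpe : p % 2 = 0) (hqe : q % 2 = 0) :
    Nat.card (RhoSol00 n p q (by omega) (by omega) (by omega)) =
        Nat.choose k (p / 2) ∧
      Nat.choose k (p / 2) = Nat.choose k (q / 2) := by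
  have hk2 : 2 ≤ k := by omega
  have hctx : Rho14.Ctx k p q n := ⟨hk2, by omega, by omega, by omega, by omega⟩
  have hhalf : p / 2 ≤ k := by omega
  have hcV : ∀ T : Finset (Fin k), (Rho14.VT n T).card = n :=
    fun T => Rho14.VT_card hctx.hn (by omega)
  have key : ∀ (hp' : 2 ≤ p) (hq' : 2 ≤ q) (hn'' : q - 1 + p = n),
      Nat.card (RhoSol00 n p q hp' hq' hn'') = Nat.choose k (p / 2) := by
    intro hp' hq' hn''
    classical
    have hFbij : Function.Bijective
        (fun (Tp : {T : Finset (Fin k) // T.card = p / 2}) =>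
          (Rho14.mkSol (T := Tp.1) hctx (by have := Tp.2; omega) (j0 := ⟨0, by omega⟩) rfl
            (hcV Tp.1) hp' hq' hn'' : RhoSol00 n p q hp' hq' hn'')) := by
      constructor
      · rintro ⟨T1, h1⟩ ⟨T2, h2⟩ heq
        have hz : Rho14.mkZ n T1 (hcV T1) = Rho14.mkZ n T2 (hcV T2) :=
          congrArg RhoSol00.z heq
        have him1 := Rho14.mkZ_image (T := T1) (hcV T1)
        have him2 := Rho14.mkZ_image (T := T2) (hcV T2)
        have himg : Rho14.VT n T1 = Rho14.VT n T2 := by rw [← him1, ← him2, hz]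
        exact Subtype.ext (Rho14.VT_inj hctx.hn (by omega) himg)
      · intro s
        have hTc := Rho14.sol_Tcard hctx s
        refine ⟨⟨Rho14.Tsol k s, by omega⟩, ?_⟩
        apply Rho14.sol_ext
        show Rho14.mkZ n (Rho14.Tsol k s) (hcV _) = s.z
        apply Rho14.L_unique (Rho14.mkZ_strictAnti _) s.z_anti
        rw [Rho14.mkZ_image]
        exact (Rho14.sol_W_eq hctx s).symm
    rw [← Nat.card_eq_of_bijective _ hFbij, Nat.card_eq_fintype_card,
      Fintype.card_finset_len, Fintype.card_fin]
  refine ⟨key _ _ _, ?_⟩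
  have hq2' : q / 2 = k - p / 2 := by omega
  rw [hq2', Nat.choose_symm hhalf]
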